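/- Let C ∈ {0,1}^{k×n} be a proper matrix (full row rank, rows with pairwise disjoint supports), inducing the partition blocks H_r = supp(row r of C) for 1 ≤ r ≤ k. Let A ∈ ℝ^{n×n}. Then C is a lumping of A (i.e., rowspan(CA) ⊆ rowspan(C)) if and only if for every pair of block indices r, r' and every pair of column indices i, i' ∈ H_{r'}, one has Σ_{j ∈ H_r} A_{j,i} = Σ_{j ∈ H_r} A_{j,i'}, and moreover Σ_{j ∈ H_r} A_{j,i} = 0 for every i not belonging to any block. -/

import Mathlib

/-- Row space of a matrix: the span of its rows. -/
def rowspan {k n : ℕ} (M : Matrix (Fin k) (Fin n) ℝ) : Submodule ℝ (Fin n → ℝ) :=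
  Submodule.span ℝ (Set.range M)

theorem zero_one_lumping_characterization {k n : ℕ}
    (C : Matrix (Fin k) (Fin n) ℝ)
    (hC01 : ∀ r i, C r i = 0 ∨ C r i = 1)
    (hCrank : C.rank = k)
    (hCdisj : ∀ r r' : Fin k, r ≠ r' → ∀ i, C r i ≠ 0 → C r' i = 0)
    (A : Matrix (Fin n) (Fin n) ℝ) :
    rowspan (C * A) ≤ rowspan C ↔
      ((∀ r r' : Fin k, ∀ i i' : Fin n, C r' i = 1 → C r' i' = 1 →
          ∑ j, C r j * A j i = ∑ j, C r j * A j i') ∧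
        ∀ i : Fin n, (∀ r', C r' i = 0) →
          ∀ r : Fin k, ∑ j, C r j * A j i = 0) := by
  classical
  -- rows of C are linearly independent, hence each row has a nonzero (=1) entry
  have hLI : LinearIndependent ℝ C := by
    refine linearIndependent_iff_card_eq_finrank_span.2 ?_
    rw [Matrix.rank_eq_finrank_span_row] at hCrank
    simp only [Set.finrank, Fintype.card_fin]; exact hCrank.symm
  have hrow : ∀ r : Fin k, ∃ i, C r i = 1 := by
    intro r
    by_contra h
    push_neg at h
    have : C r = 0 := by
      funext i
      rcases hC01 r i with h0 | h1
      · exact h0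
      · exact absurd h1 (h i)
    exact hLI.ne_zero r this
  -- key: evaluating a combination of rows of C at a column i where C r' i = 1
  have key : ∀ (c : Fin k → ℝ) (r' : Fin k) (i : Fin n), C r' i = 1 →
      (∑ s, c s • C s) i = c r' := by
    intro c r' i h1
    have : ∀ s, s ≠ r' → c s * C s i = 0 := by
      intro s hs
      have : C s i = 0 := hCdisj r' s (fun h => hs h.symm) i (by rw [h1]; norm_num)
      simp [this]
    rw [Finset.sum_apply]
    rw [Finset.sum_eq_single r']
    · simp [h1]
    · intro s _ hs; simpa using this s hs
    · intro h; exact absurd (Finset.mem_univ r') h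
  constructor
  · intro hle
    have hmem : ∀ r : Fin k, ∃ c : Fin k → ℝ, ∑ s, c s • C s = (C * A) r := by
      intro r
      have : (C * A) r ∈ rowspan C := hle (Submodule.subset_span ⟨r, rfl⟩)
      exact (Submodule.mem_span_range_iff_exists_fun ℝ).1 this
    constructor
    · intro r r' i i' hi hi'
      obtain ⟨c, hc⟩ := hmem r
      have e1 : (C * A) r i = c r' := by rw [← hc]; exact key c r' i hi
      have e2 : (C * A) r i' = c r' := by rw [← hc]; exact key c r' i' hi'
      have := e1.trans e2.symm
      simpa [Matrix.mul_apply] using this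
    · intro i hzero r
      obtain ⟨c, hc⟩ := hmem r
      have : (C * A) r i = 0 := by
        rw [← hc, Finset.sum_apply]
        exact Finset.sum_eq_zero (fun s _ => by simp [hzero s])
      simpa [Matrix.mul_apply] using this
  · rintro ⟨h1, h2⟩
    rw [rowspan, Submodule.span_le]
    rintro _ ⟨r, rfl⟩
    -- choose a representative column in each block
    choose pick hpick using hrow
    refine (Submodule.mem_span_range_iff_exists_fun ℝ).2 ⟨fun r' => (C * A) r (pick r'), ?_⟩
    funext i
    by_cases hi : ∃ r', C r' i ≠ 0
    · obtain ⟨r', hr'⟩ := hi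
      have hi1 : C r' i = 1 := (hC01 r' i).resolve_left hr'
      rw [key _ r' i hi1]
      have := h1 r r' (pick r') i (hpick r') hi1
      simpa [Matrix.mul_apply] using this
    · push_neg at hi
      rw [Finset.sum_apply, Finset.sum_eq_zero (fun s _ => by simp [hi s])]
      have := h2 i hi r
      simpa [Matrix.mul_apply] using this.symm
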